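/- arXiv:1910.02174 — 2 statements merged into one kernel-verified Lean document; each statement's English description precedes it below -/
import Mathlib

section
/- Let A be an abelian group, B a group, f ∈ ⊕_B A, and B₁ ≤ B a subgroup. Then f lies in the commutator subgroup [⊕_B A, B₁] inside A ≀ B if and only if for every t ∈ B, ∏_{b ∈ B₁} f(bt) = 1. (The product makes sense since f has finite support and A is abelian.) -/
open Function SemidirectProduct

def restrictedBase (A B : Type*) [Group A] [Group B] : Subgroup (B → A) where
  carrier := {f | (mulSupport f).Finite}
  one_mem' := by simp
  mul_mem' := fun {f g} hf hg => (hf.union hg).subset (mulSupport_mul f g)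
  inv_mem' := fun {f} hf => by simpa using hf

lemma shift_finite (A B : Type*) [Group A] [Group B] (b : B) {f : B → A}
    (hf : (mulSupport f).Finite) : (mulSupport fun x => f (b⁻¹ * x)).Finite := by
  apply (hf.image (fun x => b * x)).subset
  intro x hx
  exact ⟨b⁻¹ * x, hx, by simp⟩

def wreathAut (A B : Type*) [Group A] [Group B] (b : B) : MulAut (restrictedBase A B) where
  toFun f := ⟨fun x => (f : B → A) (b⁻¹ * x), shift_finite A B b f.2⟩
  invFun f := ⟨fun x => (f : B → A) (b * x), by
    have h := shift_finite A B b⁻¹ f.2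
    simp only [inv_inv] at h
    exact h⟩
  left_inv f := Subtype.ext (funext fun x => by simp)
  right_inv f := Subtype.ext (funext fun x => by simp)
  map_mul' f g := rfl

def wreathHom (A B : Type*) [Group A] [Group B] : B →* MulAut (restrictedBase A B) where
  toFun := wreathAut A B
  map_one' := by
    ext f x
    simp [wreathAut]
  map_mul' b c := by
    ext f x
    simp [wreathAut, mul_assoc]

abbrev Wreath (A B : Type*) [Group A] [Group B] :=
  restrictedBase A B ⋊[wreathHom A B] B

section Aux

variable {A B : Type*} [CommGroup A] [Group B] (B₁ : Subgroup B)

/-- The product of `f` over the right coset `B₁ t`. -/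
noncomputable def cosetProd (f : B → A) (t : B) : A := ∏ᶠ c : B₁, f ((c : B) * t)

lemma cosetProd_supp_fin {f : B → A} (hf : (mulSupport f).Finite) (t : B) :
    (mulSupport fun c : B₁ => f ((c : B) * t)).Finite := by
  have hinj : Injective fun c : B₁ => (c : B) * t := fun a b h =>
    Subtype.ext (mul_right_cancel h)
  exact (Set.Finite.preimage hinj.injOn hf).subset (fun c hc => hc)

lemma cosetProd_mul {f g : B → A} (hf : (mulSupport f).Finite)
    (hg : (mulSupport g).Finite) (t : B) :
    cosetProd B₁ (f * g) t = cosetProd B₁ f t * cosetProd B₁ g t :=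
  finprod_mul_distrib (cosetProd_supp_fin B₁ hf t) (cosetProd_supp_fin B₁ hg t)

lemma cosetProd_inv (f : B → A) (t : B) :
    cosetProd B₁ f⁻¹ t = (cosetProd B₁ f t)⁻¹ :=
  finprod_inv_distrib _

lemma cosetProd_shift (f : B → A) {b : B} (hb : b ∈ B₁) (t : B) :
    cosetProd B₁ (fun z => f (b⁻¹ * z)) t = cosetProd B₁ f t := by
  have := finprod_comp_equiv (Equiv.mulLeft (⟨b, hb⟩ : B₁))
    (f := fun c : B₁ => f (b⁻¹ * ((c : B) * t)))
  rw [cosetProd, ← this]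
  apply finprod_congr
  intro c
  simp [cosetProd, mul_assoc]

/-- The subgroup of the base with all coset products trivial. -/
noncomputable def Tsub : Subgroup (restrictedBase A B) where
  carrier := {f | ∀ t : B, cosetProd B₁ (f : B → A) t = 1}
  one_mem' := fun t => by simp [cosetProd]
  mul_mem' := fun {f g} hf hg t => by
    rw [Subgroup.coe_mul, cosetProd_mul B₁ f.2 g.2, hf t, hg t, one_mul]
  inv_mem' := fun {f} hf t => by
    rw [Subgroup.coe_inv, cosetProd_inv, hf t, inv_one]

open scoped commutatorElement in
lemma commutator_eq (g : restrictedBase A B) (b : B) :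
    ⁅(inl g : Wreath A B), (inr b : Wreath A B)⁆ = inl (g * (wreathHom A B b g)⁻¹) := by
  rw [commutatorElement_def, ← map_inv (inl : restrictedBase A B →* Wreath A B) g,
    ← map_inv (inr : B →* Wreath A B) b, map_mul,
    ← map_inv (wreathHom A B b), inl_aut, ← mul_assoc, ← mul_assoc]

lemma gen_mem (g : restrictedBase A B) {b : B} (hb : b ∈ B₁) :
    (inl (g * (wreathHom A B b g)⁻¹) : Wreath A B) ∈
      (⁅(SemidirectProduct.inl : restrictedBase A B →* Wreath A B).range,
        B₁.map (SemidirectProduct.inr : B →* Wreath A B)⁆ : Subgroup (Wreath A B)) := by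
  rw [← commutator_eq]
  exact Subgroup.commutator_mem_commutator ⟨g, rfl⟩ ⟨b, hb, rfl⟩

lemma gen_cosetProd (g : restrictedBase A B) {b : B} (hb : b ∈ B₁) (t : B) :
    cosetProd B₁ ((g * (wreathHom A B b g)⁻¹ : restrictedBase A B) : B → A) t = 1 := by
  have h2 : (mulSupport ((wreathHom A B b g : restrictedBase A B) : B → A)).Finite :=
    (wreathHom A B b g).2
  rw [Subgroup.coe_mul, Subgroup.coe_inv, cosetProd_mul B₁ g.2 (by simpa using h2) t,
    cosetProd_inv]
  have : cosetProd B₁ ((wreathHom A B b g : restrictedBase A B) : B → A) t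
      = cosetProd B₁ (g : B → A) t := cosetProd_shift B₁ (g : B → A) hb t
  rw [this, mul_inv_cancel]

/-- A one-point function in the restricted base. -/
noncomputable def single (x : B) (a : A) : restrictedBase A B :=
  letI := Classical.propDecidable
  ⟨fun z => if z = x then a else 1,
    (Set.finite_singleton x).subset fun z hz => by
      by_contra h
      exact hz (if_neg h)⟩

lemma single_apply (x : B) (a : A) (z : B) :
    letI := Classical.propDecidable
    (single x a : B → A) z = if z = x then a else 1 := rfl

lemma shift_single (x : B) (a : A) (b : B) :
    wreathHom A B b (single x a) = single (b * x) a := by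
  apply Subtype.ext
  funext z
  show (single x a : B → A) (b⁻¹ * z) = (single (b * x) a : B → A) z
  rw [single_apply, single_apply]
  rcases eq_or_ne z (b * x) with rfl | hz
  · rw [if_pos rfl, if_pos (by rw [inv_mul_cancel_left])]
  · rw [if_neg hz, if_neg]
    intro h
    exact hz (by rw [← h, mul_inv_cancel_left])

lemma single_inv (x : B) (a : A) :
    (single x a : restrictedBase A B)⁻¹ = single x a⁻¹ := by
  apply Subtype.ext
  funext z
  show ((single x a : B → A) z)⁻¹ = (single x a⁻¹ : B → A) z
  rw [single_apply, single_apply, apply_ite Inv.inv, inv_one]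

lemma single_gen (x : B) (a : A) (b : B) :
    (single x a : restrictedBase A B) * (wreathHom A B b (single x a))⁻¹
      = single x a * single (b * x) a⁻¹ := by
  rw [shift_single, single_inv]

lemma gen2_mem (x : B) (a : A) {b : B} (hb : b ∈ B₁) :
    (inl (single x a * single (b * x) a⁻¹) : Wreath A B) ∈
      (⁅(SemidirectProduct.inl : restrictedBase A B →* Wreath A B).range,
        B₁.map (SemidirectProduct.inr : B →* Wreath A B)⁆ : Subgroup (Wreath A B)) :=
  single_gen x a b ▸ gen_mem B₁ (single x a) hb

lemma gen2_cosetProd (x : B) (a : A) {b : B} (hb : b ∈ B₁) (t : B) :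
    cosetProd B₁ ((single x a * single (b * x) a⁻¹ : restrictedBase A B) : B → A) t = 1 :=
  single_gen x a b ▸ gen_cosetProd B₁ (single x a) hb t

lemma key (n : ℕ) : ∀ f : restrictedBase A B,
    (f.2 : (mulSupport (f : B → A)).Finite).toFinset.card ≤ n →
    (∀ t : B, cosetProd B₁ (f : B → A) t = 1) →
    (inl f : Wreath A B) ∈
      (⁅(SemidirectProduct.inl : restrictedBase A B →* Wreath A B).range,
        B₁.map (SemidirectProduct.inr : B →* Wreath A B)⁆ : Subgroup (Wreath A B)) := by
  classical
  induction n with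
  | zero =>
    intro f hcard _
    have : f = 1 := by
      apply Subtype.ext
      funext z
      by_contra hz
      have hzmem : z ∈ (f.2 : (mulSupport (f : B → A)).Finite).toFinset := by
        simp [Set.Finite.mem_toFinset, mulSupport]; exact hz
      have := Finset.card_pos.mpr ⟨z, hzmem⟩
      omega
    rw [this, map_one]
    exact Subgroup.one_mem _
  | succ n ih =>
    intro f hcard hprod
    by_cases hone : f = 1
    · rw [hone, map_one]; exact Subgroup.one_mem _
    obtain ⟨x, hx⟩ : ∃ x, (f : B → A) x ≠ 1 := by
      by_contra h
      push_neg at h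
      exact hone (Subtype.ext (funext fun z => h z))
    set a := (f : B → A) x with ha
    -- find another support point in the same coset
    obtain ⟨c, hc1, hcx⟩ : ∃ c : B₁, c ≠ 1 ∧ (f : B → A) ((c : B) * x) ≠ 1 := by
      by_contra h
      push_neg at h
      have h1 : cosetProd B₁ (f : B → A) x = (f : B → A) (((1 : B₁) : B) * x) :=
        finprod_eq_single _ _ (fun c hc => h c hc)
      rw [hprod x] at h1
      simp only [OneMemClass.coe_one, one_mul] at h1
      exact hx h1.symm
    set b : B := (c : B) with hbdef
    have hb : b ∈ B₁ := c.2
    have hyx : b * x ≠ x := fun h => hc1 (by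
      have hb1 : b = 1 := mul_right_cancel (h.trans (one_mul x).symm)
      exact OneMemClass.coe_eq_one.mp hb1)
    set gpos : restrictedBase A B := single x a * single (b * x) a⁻¹ with hgpos
    set g : restrictedBase A B := f * gpos⁻¹ with hg
    have hgz : ∀ z, (g : B → A) z
        = (f : B → A) z * ((single x a : B → A) z)⁻¹
          * ((single (b * x) a⁻¹ : B → A) z)⁻¹ := by
      intro z
      show (f : B → A) z * (((single x a : B → A) z * (single (b * x) a⁻¹ : B → A) z)⁻¹) = _
      rw [mul_inv, mul_assoc]
    have hsupp : mulSupport (g : B → A) ⊆ mulSupport (f : B → A) \ {x} := by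
      intro z hz
      constructor
      · by_contra hzf
        rw [mem_mulSupport, not_not] at hzf
        have hzx : z ≠ x := fun h => hx (by rw [ha, ← h]; exact hzf)
        have hzy : z ≠ b * x := fun h => hcx (by rw [← h]; exact hzf)
        apply hz
        rw [hgz z, hzf, single_apply, single_apply, if_neg hzx, if_neg hzy]
        simp
      · intro hzx
        rw [Set.mem_singleton_iff] at hzx
        apply hz
        rw [hgz z, hzx, single_apply, single_apply, if_pos rfl, if_neg (Ne.symm hyx)]
        simp [ha]
    have hcard' : (g.2 : (mulSupport (g : B → A)).Finite).toFinset.card ≤ n := by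
      have hxm : x ∈ (f.2 : (mulSupport (f : B → A)).Finite).toFinset := by
        exact (Set.Finite.mem_toFinset _).mpr hx
      have hsub : (g.2 : (mulSupport (g : B → A)).Finite).toFinset
          ⊆ (f.2 : (mulSupport (f : B → A)).Finite).toFinset.erase x := by
        intro z hz
        replace hz := (Set.Finite.mem_toFinset _).mp hz
        have := hsupp hz
        rw [Finset.mem_erase]
        exact ⟨this.2, (Set.Finite.mem_toFinset _).mpr this.1⟩
      have := Finset.card_le_card hsub
      rw [Finset.card_erase_of_mem hxm] at this
      omega
    have hprod' : ∀ t : B, cosetProd B₁ (g : B → A) t = 1 := by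
      intro t
      have : (g : B → A) = (f : B → A) * ((gpos⁻¹ : restrictedBase A B) : B → A) := rfl
      rw [this, cosetProd_mul B₁ f.2 (gpos⁻¹).2, hprod t, one_mul,
        Subgroup.coe_inv, cosetProd_inv, gen2_cosetProd B₁ x a hb t, inv_one]
    have hgmem := ih g hcard' hprod'
    have : f = g * gpos := by rw [hg]; group
    rw [this, map_mul]
    exact Subgroup.mul_mem _ hgmem (gen2_mem B₁ x a hb)

end Aux

/-- For `A` abelian, `f ∈ [⊕_B A, B₁]` inside `A ≀ B` iff
`∏_{b ∈ B₁} f(b·t) = 1` for every `t ∈ B`. -/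
theorem stmt1 (A B : Type*) [CommGroup A] [Group B] (B₁ : Subgroup B)
    (f : restrictedBase A B) :
    (SemidirectProduct.inl f : Wreath A B) ∈
        (⁅(SemidirectProduct.inl : restrictedBase A B →* Wreath A B).range,
          B₁.map (SemidirectProduct.inr : B →* Wreath A B)⁆ : Subgroup (Wreath A B))
      ↔ ∀ t : B, ∏ᶠ c : B₁, (f : B → A) ((c : B) * t) = 1 := by
  constructor
  · intro hmem t
    have hle : (⁅(SemidirectProduct.inl : restrictedBase A B →* Wreath A B).range,
          B₁.map (SemidirectProduct.inr : B →* Wreath A B)⁆ : Subgroup (Wreath A B))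
        ≤ (Tsub B₁).map inl := by
      rw [Subgroup.commutator_le]
      rintro _ ⟨g, rfl⟩ _ ⟨b, hb, rfl⟩
      rw [commutator_eq]
      exact ⟨_, fun t => gen_cosetProd B₁ g hb t, rfl⟩
    obtain ⟨g, hg, hgf⟩ := hle hmem
    have : g = f := inl_injective hgf
    exact this ▸ hg t
  · intro hf
    exact key B₁ ((f.2 : (mulSupport (f : B → A)).Finite).toFinset.card) f le_rfl
      (fun t => hf t)
end

section
/- Let A and B be groups and N ◁ A ≀ B a normal subgroup of the restricted wreath product. If N ∩ B ≠ {1}, then the subgroup ⊕_B [A,A] (all finitely supported functions B → [A,A]) is contained in N. -/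
open Function SemidirectProduct
open scoped commutatorElement

section Aux

variable {A B : Type*} [Group A] [Group B] [DecidableEq B]

def delta (x : B) : A →* restrictedBase A B where
  toFun a := ⟨Pi.mulSingle x a,
    (Set.finite_singleton x).subset Pi.mulSupport_mulSingle_subset⟩
  map_one' := Subtype.ext (by simp)
  map_mul' a c := Subtype.ext (by simp [Pi.mulSingle_mul])

lemma delta_coe (x : B) (a : A) :
    ((delta x a : restrictedBase A B) : B → A) = Pi.mulSingle x a :=
  rfl

lemma wreathHom_delta (b x : B) (a : A) :
    wreathHom A B b (delta x a) = delta (b * x) a := by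
  apply Subtype.ext
  funext y
  have h1 : ((wreathHom A B b (delta x a) : restrictedBase A B) : B → A) y
      = (Pi.mulSingle x a : B → A) (b⁻¹ * y) := rfl
  rw [h1, delta_coe, Pi.mulSingle_apply, Pi.mulSingle_apply]
  congr 1
  rw [eq_iff_iff, inv_mul_eq_iff_eq_mul]

lemma delta_comm_eq (x : B) {z : B} (hz : z ≠ x) (a c : A) :
    (delta x a * delta z a⁻¹) * delta x c * (delta x a * delta z a⁻¹)⁻¹ * (delta x c)⁻¹
      = delta x ⁅a, c⁆ := by
  apply Subtype.ext
  funext y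
  simp only [Subgroup.coe_mul, Subgroup.coe_inv, Pi.mul_apply, Pi.inv_apply, delta_coe]
  by_cases hyx : y = x
  · subst hyx
    simp [Pi.mulSingle_apply, hz, commutatorElement_def, mul_assoc]
  · by_cases hyz : y = z
    · subst hyz
      simp [Pi.mulSingle_apply, hyx]
    · simp [Pi.mulSingle_apply, hyx, hyz]

end Aux

/-- If `N ◁ A ≀ B` intersects the canonical copy of `B` nontrivially, then
every finitely supported function `B → [A,A]` lies in `N`. -/
theorem stmt5 (A B : Type*) [Group A] [Group B] (N : Subgroup (Wreath A B)) [N.Normal]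
    (h : ∃ b : B, b ≠ 1 ∧ (SemidirectProduct.inr b : Wreath A B) ∈ N) :
    ∀ f : restrictedBase A B, (∀ x : B, (f : B → A) x ∈ commutator A) →
      (SemidirectProduct.inl f : Wreath A B) ∈ N := by
  classical
  obtain ⟨b, hb, hbN⟩ := h
  have hN : N.Normal := ‹_›
  -- conjugation of delta by inr b
  have key : ∀ (x : B) (a : A),
      (inr b * inl ((delta x a)⁻¹) * inr b⁻¹ : Wreath A B) = inl (delta (b * x) a⁻¹) := by
    intro x a
    rw [← inl_aut, ← map_inv, wreathHom_delta]
  -- step 1: inl (delta x a * delta (b*x) a⁻¹) ∈ N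
  have step1 : ∀ (x : B) (a : A),
      (inl (delta x a * delta (b * x) a⁻¹) : Wreath A B) ∈ N := by
    intro x a
    have h1 : (inl (delta x a) * inr b * inl ((delta x a)⁻¹) * inr b⁻¹ : Wreath A B) ∈ N := by
      rw [map_inv, map_inv]
      exact mul_mem (hN.conj_mem _ hbN _) (inv_mem hbN)
    have h2 : (inl (delta x a) * inr b * inl ((delta x a)⁻¹) * inr b⁻¹ : Wreath A B)
        = inl (delta x a * delta (b * x) a⁻¹) := by
      rw [map_mul, ← key]
      group
    rwa [h2] at h1
  -- step 2: inl (delta x ⁅a,c⁆) ∈ N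
  have step2 : ∀ (x : B) (a c : A), (inl (delta x ⁅a, c⁆) : Wreath A B) ∈ N := by
    intro x a c
    have hbx : b * x ≠ x := fun hh => hb (mul_eq_right.mp hh)
    have hF := step1 x a
    have hmem : (inl (delta x a * delta (b * x) a⁻¹) *
        (inl (delta x c) * (inl (delta x a * delta (b * x) a⁻¹))⁻¹ * (inl (delta x c))⁻¹)
        : Wreath A B) ∈ N :=
      mul_mem hF (hN.conj_mem _ (inv_mem hF) _)
    have heq : (inl (delta x a * delta (b * x) a⁻¹) *
        (inl (delta x c) * (inl (delta x a * delta (b * x) a⁻¹))⁻¹ * (inl (delta x c))⁻¹)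
        : Wreath A B) = inl (delta x ⁅a, c⁆) := by
      rw [← map_inv, ← map_inv, ← map_mul, ← map_mul, ← map_mul,
        ← delta_comm_eq x hbx a c]
      congr 1
      group
    rwa [heq] at hmem
  -- step 3: inl (delta x a) ∈ N for a ∈ commutator A
  have step3 : ∀ (x : B) (a : A), a ∈ commutator A → (inl (delta x a) : Wreath A B) ∈ N := by
    intro x a ha
    have hle : commutator A ≤
        N.comap ((inl : restrictedBase A B →* Wreath A B).comp (delta x)) := by
      rw [commutator_def, Subgroup.commutator_le]
      intro a _ c _
      simpa using step2 x a c
    exact hle ha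
  -- step 4: induction on support
  suffices H : ∀ (s : Finset B) (f : restrictedBase A B), (∀ y ∉ s, (f : B → A) y = 1) →
      (∀ x : B, (f : B → A) x ∈ commutator A) → (inl f : Wreath A B) ∈ N by
    intro f hf
    refine H f.2.toFinset f (fun y hy => ?_) hf
    have hy' : y ∉ mulSupport (f : B → A) := fun h => hy ((Set.Finite.mem_toFinset _).2 h)
    simpa [mulSupport] using hy'
  intro s
  induction s using Finset.induction_on with
  | empty =>
    intro f hsupp _
    have hf1 : f = 1 := Subtype.ext (funext fun y => hsupp y (Finset.notMem_empty y))
    rw [hf1, map_one]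
    exact one_mem N
  | @insert x t hx ih =>
    intro f hsupp hcomm
    have hgy : ∀ y, (((delta x ((f : B → A) x))⁻¹ * f : restrictedBase A B) : B → A) y
        = ((Pi.mulSingle x ((f : B → A) x) : B → A) y)⁻¹ * (f : B → A) y := fun y => rfl
    have hgsupp : ∀ y ∉ t, (((delta x ((f : B → A) x))⁻¹ * f : restrictedBase A B) : B → A) y = 1 := by
      intro y hyt
      rw [hgy]
      by_cases hyx : y = x
      · subst hyx; simp [Pi.mulSingle_apply]
      · rw [Pi.mulSingle_apply, if_neg hyx, hsupp y (by simp [hyx, hyt]), inv_one, one_mul]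
    have hgcomm : ∀ y, (((delta x ((f : B → A) x))⁻¹ * f : restrictedBase A B) : B → A) y
        ∈ commutator A := by
      intro y
      rw [hgy]
      refine mul_mem (inv_mem ?_) (hcomm y)
      rw [Pi.mulSingle_apply]
      split
      · exact hcomm x
      · exact one_mem _
    have hsplit : f = delta x ((f : B → A) x) * ((delta x ((f : B → A) x))⁻¹ * f) := by
      group
    rw [hsplit, map_mul]
    exact mul_mem (step3 x _ (hcomm x)) (ih _ hgsupp hgcomm)
end
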